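/- Let 𝒳 be a Polish space with metric d and let 𝒴 ⊆ 𝒳 be a nonempty compact subset. Then there exists a Borel measurable map 𝖯 : 𝒳 → 𝒴 such that d(x, 𝖯x) ≤ 2 dist(x, 𝒴) for every x ∈ 𝒳; in particular 𝖯x = x for x ∈ 𝒴. -/
import Mathlib


open MeasureTheory Metric

/-- For a nonempty compact subset `Y` of a Polish space `X`, there is a Borel
measurable map `𝖯 : X → Y` with `d(x, 𝖯x) ≤ 2 dist(x, Y)` for every `x`; in particular
`𝖯x = x` for `x ∈ Y`. -/
theorem exists_measurable_approximate_projection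
    {X : Type*} [MetricSpace X] [CompleteSpace X] [TopologicalSpace.SeparableSpace X]
    [MeasurableSpace X] [BorelSpace X]
    (Y : Set X) (hYne : Y.Nonempty) (hYcpt : IsCompact Y) :
    ∃ P : X → X, Measurable P ∧ (∀ x, P x ∈ Y) ∧
      (∀ x, dist x (P x) ≤ 2 * Metric.infDist x Y) ∧
      (∀ x ∈ Y, P x = x) := by
  classical
  have hYclosed : IsClosed Y := hYcpt.isClosed
  -- countable dense set in Y
  haveI : Nonempty Y := hYne.to_subtype
  obtain ⟨s, hsc, hsd⟩ := TopologicalSpace.exists_countable_dense (Y : Set X)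
  have hsne : s.Nonempty := hsd.nonempty
  obtain ⟨f, hf⟩ := hsc.exists_eq_range hsne
  set F : ℕ → X := fun n => (f n : X) with hF
  have hFmem : ∀ n, F n ∈ Y := fun n => (f n).2
  set p : X → ℕ → Prop := fun x n => dist x (F n) ≤ 2 * infDist x Y ∨ x ∈ Y with hp
  have hex : ∀ x, ∃ n, p x n := by
    intro x
    by_cases hx : x ∈ Y
    · exact ⟨0, Or.inr hx⟩
    · have hpos : 0 < infDist x Y := by
        rwa [hYclosed.notMem_iff_infDist_pos hYne] at hx
      obtain ⟨y, hyY, hyd⟩ := hYcpt.exists_infDist_eq_dist hYne x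
      -- find f n close to y
      have : (⟨y, hyY⟩ : Y) ∈ closure s := hsd _
      obtain ⟨z, hzs, hz⟩ := Metric.mem_closure_iff.1 this (infDist x Y) hpos
      obtain ⟨n, rfl⟩ : ∃ n, f n = z := by
        rw [hf] at hzs; exact hzs
      refine ⟨n, Or.inl ?_⟩
      have hdz : dist y (F n) < infDist x Y := by
        simpa [Subtype.dist_eq, F] using hz
      calc dist x (F n) ≤ dist x y + dist y (F n) := dist_triangle _ _ _
        _ ≤ infDist x Y + infDist x Y := by
            rw [hyd] at *; linarith
        _ = 2 * infDist x Y := by ring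
  have hmeas : ∀ n, MeasurableSet {x | p x n} := by
    intro n
    have h1 : IsClosed {x | dist x (F n) ≤ 2 * infDist x Y} :=
      isClosed_le (continuous_id.dist continuous_const)
        (continuous_const.mul (continuous_infDist_pt Y))
    exact (h1.measurableSet.union hYclosed.measurableSet)
  set g : X → X := fun x => F (Nat.find (hex x)) with hg
  have hgmeas : Measurable g := by
    have : Measurable fun x => Nat.find (hex x) := measurable_find hex hmeas
    exact (measurable_from_top (f := F)).comp this
  set P : X → X := fun x => if x ∈ Y then x else g x with hP
  have hPY : ∀ x, P x ∈ Y := by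
    intro x
    by_cases hx : x ∈ Y
    · simp [P, hx]
    · simp only [P, hx, if_false]
      exact hFmem _
  refine ⟨P, ?_, hPY, ?_, ?_⟩
  · exact Measurable.ite hYclosed.measurableSet measurable_id hgmeas
  · intro x
    by_cases hx : x ∈ Y
    · simp only [P, hx, if_true, dist_self]
      have := Metric.infDist_nonneg (x := x) (s := Y); linarith
    · simp only [P, hx, if_false]
      have := Nat.find_spec (hex x)
      rcases this with h | h
      · exact h
      · exact absurd h hx
  · intro x hx; simp [P, hx]
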